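/- A d-dimensional b-regular mono-curve has neutral orientation if and only if there exists a positive integer m such that every permutation in S_d can be written as a composition of exactly m permutations from the multiset {a(0), ..., a(b^d - 1)} of subregion permutations. -/

import Mathlib

set_option linter.unusedSectionVars false

open Finset Filter

namespace NeutralAux

variable {G : Type} [Group G] [Fintype G] [DecidableEq G]
variable {ι : Type} [Fintype ι]

/-- number of sequences of length `m` whose product is `σ` -/
def cnt (a : ι → G) (m : ℕ) (σ : G) : ℕ :=
  (Finset.univ.filter
    (fun R : Fin m → ι => (List.ofFn (fun t => a (R t))).prod = σ)).card

lemma sum_cnt (a : ι → G) (m : ℕ) :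
    ∑ σ : G, cnt a m σ = (Fintype.card ι) ^ m := by
  classical
  have h := Finset.card_eq_sum_card_fiberwise
    (f := fun R : Fin m → ι => (List.ofFn fun t => a (R t)).prod)
    (s := univ) (t := univ) (fun _ _ => mem_univ _)
  rw [Finset.card_univ] at h
  simp only [Fintype.card_fun, Fintype.card_fin] at h
  rw [h]
  rfl

lemma cnt_add (a : ι → G) (m n : ℕ) (σ : G) :
    cnt a (m + n) σ = ∑ τ : G, cnt a m τ * cnt a n (τ⁻¹ * σ) := by
  classical
  let E : (Fin (m + n) → ι) ≃ (Fin m → ι) × (Fin n → ι) :=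
    (Equiv.arrowCongr finSumFinEquiv.symm (Equiv.refl ι)).trans
      (Equiv.sumArrowEquivProdArrow _ _ _)
  have hE1 : ∀ (R : Fin (m + n) → ι) (i : Fin m), (E R).1 i = R (Fin.castAdd n i) := by
    intro R i
    simp [E, Equiv.sumArrowEquivProdArrow, Equiv.arrowCongr]
  have hE2 : ∀ (R : Fin (m + n) → ι) (j : Fin n), (E R).2 j = R (Fin.natAdd m j) := by
    intro R j
    simp [E, Equiv.sumArrowEquivProdArrow, Equiv.arrowCongr]
  have hprod : ∀ R : Fin (m + n) → ι,
      (List.ofFn fun t => a (R t)).prod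
        = (List.ofFn fun i => a ((E R).1 i)).prod * (List.ofFn fun j => a ((E R).2 j)).prod := by
    intro R
    rw [List.ofFn_add (f := fun t => a (R t)), List.prod_append]
    have e1 : (fun i : Fin m => a (R (Fin.castAdd n i))) = fun i => a ((E R).1 i) := by
      funext i; rw [hE1]
    have e2 : (fun j : Fin n => a (R (Fin.natAdd m j))) = fun j => a ((E R).2 j) := by
      funext j; rw [hE2]
    rw [← e1, ← e2]; rfl
  have step1 : cnt a (m + n) σ =
      (Finset.univ.filter (fun p : (Fin m → ι) × (Fin n → ι) =>
        (List.ofFn fun i => a (p.1 i)).prod * (List.ofFn fun j => a (p.2 j)).prod = σ)).card := by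
    apply Finset.card_equiv E
    intro R
    simp only [mem_filter, mem_univ, true_and]
    rw [hprod R]
  rw [step1]
  rw [Finset.card_eq_sum_card_fiberwise
    (f := fun p : (Fin m → ι) × (Fin n → ι) => (List.ofFn fun i => a (p.1 i)).prod)
    (s := _) (t := univ) (fun _ _ => mem_univ _)]
  refine Finset.sum_congr rfl (fun τ _ => ?_)
  rw [Finset.filter_filter]
  have hset : (Finset.univ.filter (fun p : (Fin m → ι) × (Fin n → ι) =>
      ((List.ofFn fun i => a (p.1 i)).prod * (List.ofFn fun j => a (p.2 j)).prod = σ)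
        ∧ (List.ofFn fun i => a (p.1 i)).prod = τ))
      = (Finset.univ.filter (fun R1 : Fin m → ι => (List.ofFn fun i => a (R1 i)).prod = τ)) ×ˢ
        (Finset.univ.filter (fun R2 : Fin n → ι => (List.ofFn fun j => a (R2 j)).prod = τ⁻¹ * σ)) := by
    ext p
    simp only [mem_filter, mem_univ, true_and, Finset.mem_product]
    constructor
    · rintro ⟨h1, h2⟩
      refine ⟨h2, ?_⟩
      rw [← h1, h2]
      group
    · rintro ⟨h1, h2⟩
      refine ⟨?_, h1⟩
      rw [h1, h2]
      group
  rw [hset, Finset.card_product]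
  rfl

/-- the probability distribution of products of random length-`m` sequences -/
noncomputable def p (a : ι → G) (m : ℕ) (σ : G) : ℝ :=
  (cnt a m σ : ℝ) / (Fintype.card ι : ℝ) ^ m

lemma p_nonneg (a : ι → G) (m : ℕ) (σ : G) : 0 ≤ p a m σ := by
  unfold p; positivity

lemma sum_p (a : ι → G) (hι : 0 < Fintype.card ι) (m : ℕ) : ∑ σ : G, p a m σ = 1 := by
  unfold p
  rw [← Finset.sum_div]
  rw [show ∑ σ : G, (cnt a m σ : ℝ) = ((∑ σ : G, cnt a m σ : ℕ) : ℝ) by push_cast; ring]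
  rw [sum_cnt]
  rw [div_eq_one_iff_eq]
  · push_cast; ring
  · positivity

lemma p_add (a : ι → G) (hι : 0 < Fintype.card ι) (m n : ℕ) (σ : G) :
    p a (m + n) σ = ∑ τ : G, p a m τ * p a n (τ⁻¹ * σ) := by
  unfold p
  have hN : (Fintype.card ι : ℝ) ≠ 0 := by positivity
  rw [cnt_add]
  push_cast
  rw [Finset.sum_div]
  refine Finset.sum_congr rfl (fun τ _ => ?_)
  rw [div_mul_div_comm, ← pow_add]


/-- uniform distribution value -/
noncomputable def u (G : Type) [Fintype G] : ℝ := (Fintype.card G : ℝ)⁻¹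

/-- L¹ distance to uniform -/
noncomputable def D (a : ι → G) (n : ℕ) : ℝ := ∑ σ : G, |p a n σ - u G|

lemma sum_shift (f : G → ℝ) (σ : G) : ∑ τ : G, f (τ⁻¹ * σ) = ∑ ρ : G, f ρ := by
  exact Fintype.sum_equiv ((Equiv.inv G).trans (Equiv.mulRight σ)) _ _ (fun τ => rfl)

lemma sum_shift' (f : G → ℝ) (τ : G) : ∑ σ : G, f (τ⁻¹ * σ) = ∑ ρ : G, f ρ := by
  exact Fintype.sum_equiv (Equiv.mulLeft τ⁻¹) _ _ (fun σ => rfl)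

lemma contraction (a : ι → G) (hι : 0 < Fintype.card ι) (n k : ℕ) (ε : ℝ) (hε : 0 ≤ ε)
    (hk : ∀ σ, ε ≤ p a k σ) :
    D a (n + k) ≤ (1 - Fintype.card G * ε) * D a n := by
  have hGpos : 0 < (Fintype.card G : ℝ) := by
    exact_mod_cast Fintype.card_pos
  have huG : (Fintype.card G : ℝ) * u G = 1 := by
    rw [u]; field_simp
  set q : G → ℝ := fun ρ => p a k ρ - ε with hq
  have hqnn : ∀ ρ, 0 ≤ q ρ := fun ρ => by simp [hq, hk ρ]
  have hqsum : ∑ ρ : G, q ρ = 1 - Fintype.card G * ε := by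
    simp only [hq, Finset.sum_sub_distrib, sum_p a hι k, Finset.sum_const, Finset.card_univ,
      nsmul_eq_mul]
  have key : ∀ σ : G, p a (n + k) σ - u G = ∑ τ : G, (p a n τ - u G) * q (τ⁻¹ * σ) := by
    intro σ
    have h1 : ∑ τ : G, (p a n τ - u G) * q (τ⁻¹ * σ)
        = ∑ τ : G, p a n τ * q (τ⁻¹ * σ) - ∑ τ : G, u G * q (τ⁻¹ * σ) := by
      rw [← Finset.sum_sub_distrib]
      exact Finset.sum_congr rfl (fun τ _ => by ring)
    have h2 : ∑ τ : G, u G * q (τ⁻¹ * σ) = u G * (1 - Fintype.card G * ε) := by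
      rw [← Finset.mul_sum, sum_shift q σ, hqsum]
    have h3 : ∑ τ : G, p a n τ * q (τ⁻¹ * σ)
        = p a (n + k) σ - ε := by
      have : ∑ τ : G, p a n τ * q (τ⁻¹ * σ)
          = ∑ τ : G, p a n τ * p a k (τ⁻¹ * σ) - ∑ τ : G, p a n τ * ε := by
        rw [← Finset.sum_sub_distrib]
        exact Finset.sum_congr rfl (fun τ _ => by simp [hq]; ring)
      rw [this, ← p_add a hι n k σ, ← Finset.sum_mul, sum_p a hι n, one_mul]
    rw [h1, h2, h3]
    have : u G * (1 - Fintype.card G * ε) = u G - ε := by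
      have : u G * ((Fintype.card G : ℝ) * ε) = ε := by
        rw [← mul_assoc, mul_comm (u G), huG, one_mul]
      ring_nf
      ring_nf at this
      linarith
    rw [this]
    ring
  unfold D
  calc ∑ σ : G, |p a (n + k) σ - u G|
      ≤ ∑ σ : G, ∑ τ : G, |p a n τ - u G| * q (τ⁻¹ * σ) := by
        refine Finset.sum_le_sum (fun σ _ => ?_)
        rw [key σ]
        refine (Finset.abs_sum_le_sum_abs _ _).trans ?_
        refine Finset.sum_le_sum (fun τ _ => ?_)
        rw [abs_mul, abs_of_nonneg (hqnn _)]
    _ = ∑ τ : G, |p a n τ - u G| * ∑ σ : G, q (τ⁻¹ * σ) := by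
        rw [Finset.sum_comm]
        exact Finset.sum_congr rfl (fun τ _ => by rw [Finset.mul_sum])
    _ = (1 - Fintype.card G * ε) * ∑ τ : G, |p a n τ - u G| := by
        rw [Finset.mul_sum]
        refine Finset.sum_congr rfl (fun τ _ => ?_)
        rw [sum_shift' q τ, hqsum]
        ring

lemma D_antitone (a : ι → G) (hι : 0 < Fintype.card ι) : Antitone (D a) := by
  refine antitone_nat_of_succ_le (fun n => ?_)
  have := contraction a hι n 1 0 le_rfl (fun σ => p_nonneg a 1 σ)
  simpa using this

lemma D_le_two (a : ι → G) (hι : 0 < Fintype.card ι) (n : ℕ) : D a n ≤ 2 := by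
  have hGpos : 0 < (Fintype.card G : ℝ) := by exact_mod_cast Fintype.card_pos
  have hu : 0 ≤ u G := by rw [u]; positivity
  have : D a n ≤ ∑ σ : G, (p a n σ + u G) := by
    refine Finset.sum_le_sum (fun σ _ => ?_)
    refine (abs_sub _ _).trans ?_
    rw [abs_of_nonneg (p_nonneg a n σ), abs_of_nonneg hu]
  refine this.trans ?_
  rw [Finset.sum_add_distrib, sum_p a hι n, Finset.sum_const, Finset.card_univ, nsmul_eq_mul]
  rw [u]
  rw [mul_inv_cancel₀ (ne_of_gt hGpos)]
  norm_num

lemma tendsto_of_pos (a : ι → G) (hι : 0 < Fintype.card ι) (m0 : ℕ) (hm0 : 0 < m0)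
    (hpos : ∀ σ, 0 < p a m0 σ) :
    Tendsto (fun m : ℕ => fun σ : G => p a m σ) atTop (nhds (fun _ => u G)) := by
  classical
  have hGpos : 0 < (Fintype.card G : ℝ) := by exact_mod_cast Fintype.card_pos
  obtain ⟨σ0, -, hσ0⟩ := Finset.exists_min_image (univ : Finset G) (p a m0) ⟨1, mem_univ 1⟩
  set ε := p a m0 σ0 with hεdef
  have hε : 0 < ε := hpos σ0
  have hεle : ∀ σ, ε ≤ p a m0 σ := fun σ => hσ0 σ (mem_univ σ)
  set c := (Fintype.card G : ℝ) * ε with hc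
  have hc0 : 0 < c := by positivity
  have hc1 : c ≤ 1 := by
    have : ∑ _σ : G, ε ≤ ∑ σ : G, p a m0 σ := Finset.sum_le_sum (fun σ _ => hεle σ)
    rw [sum_p a hι m0, Finset.sum_const, Finset.card_univ, nsmul_eq_mul] at this
    exact this
  have h1c0 : 0 ≤ 1 - c := by linarith
  have h1c1 : 1 - c < 1 := by linarith
  have hDk : ∀ k : ℕ, D a (m0 * k) ≤ 2 * (1 - c) ^ k := by
    intro k
    induction k with
    | zero => simpa using D_le_two a hι 0
    | succ k ih =>
      have : D a (m0 * k + m0) ≤ (1 - c) * D a (m0 * k) :=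
        contraction a hι (m0 * k) m0 ε hε.le hεle
      calc D a (m0 * (k + 1)) = D a (m0 * k + m0) := by ring_nf
        _ ≤ (1 - c) * D a (m0 * k) := this
        _ ≤ (1 - c) * (2 * (1 - c) ^ k) := by
            exact mul_le_mul_of_nonneg_left ih h1c0
        _ = 2 * (1 - c) ^ (k + 1) := by ring
  have hDn : ∀ n : ℕ, D a n ≤ 2 * (1 - c) ^ (n / m0) := by
    intro n
    have h1 : m0 * (n / m0) ≤ n := Nat.mul_div_le n m0
    exact (D_antitone a hι h1).trans (hDk (n / m0))
  have hdiv : Tendsto (fun n : ℕ => n / m0) atTop atTop := by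
    refine tendsto_atTop_atTop.2 (fun b => ⟨m0 * b, fun n hn => ?_⟩)
    exact (Nat.le_div_iff_mul_le hm0).2 (by rw [mul_comm] at hn; exact hn)
  have hpow : Tendsto (fun n : ℕ => 2 * (1 - c) ^ (n / m0)) atTop (nhds 0) := by
    have h0 : Tendsto (fun k : ℕ => (1 - c) ^ k) atTop (nhds 0) :=
      tendsto_pow_atTop_nhds_zero_of_lt_one h1c0 h1c1
    have := (h0.comp hdiv).const_mul (2 : ℝ)
    simpa using this
  have hD0 : Tendsto (D a) atTop (nhds 0) := by
    refine squeeze_zero (fun n => ?_) hDn hpow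
    exact Finset.sum_nonneg (fun σ _ => abs_nonneg _)
  rw [tendsto_pi_nhds]
  intro σ
  have habs : ∀ n, ‖p a n σ - u G‖ ≤ D a n := by
    intro n
    exact Finset.single_le_sum (f := fun τ => |p a n τ - u G|)
      (fun τ _ => abs_nonneg _) (mem_univ σ)
  have hsub : Tendsto (fun n => p a n σ - u G) atTop (nhds 0) :=
    squeeze_zero_norm habs hD0
  have := hsub.add_const (u G)
  simpa using this

end NeutralAux

open NeutralAux in
theorem test_main
    (b d : ℕ) (hb : 2 ≤ b) (hd : 1 ≤ d) (a : Fin (b ^ d) → Equiv.Perm (Fin d)) :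
    Filter.Tendsto
    (fun m : ℕ => fun σ : Equiv.Perm (Fin d) =>
      ((Finset.univ.filter
          (fun R : Fin m → Fin (b ^ d) => (List.ofFn (fun t => a (R t))).prod = σ)).card : ℝ)
        / (Fintype.card (Fin (b ^ d)) : ℝ) ^ m)
    Filter.atTop (nhds (fun _ => (Nat.factorial d : ℝ)⁻¹)) ↔
      ∃ m : ℕ, 0 < m ∧ ∀ σ : Equiv.Perm (Fin d),
        ∃ L : List (Fin (b ^ d)), L.length = m ∧ (L.map a).prod = σ := by
  classical
  have hb0 : 0 < b ^ d := by positivity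
  have hι : 0 < Fintype.card (Fin (b ^ d)) := by
    rw [Fintype.card_fin]; exact hb0
  have hcard : Fintype.card (Equiv.Perm (Fin d)) = d.factorial := by
    rw [Fintype.card_perm, Fintype.card_fin]
  have hconst : (fun _ : Equiv.Perm (Fin d) => (Nat.factorial d : ℝ)⁻¹)
      = fun _ => u (Equiv.Perm (Fin d)) := by
    funext _; rw [u, hcard]
  rw [hconst]
  have hfun : (fun m : ℕ => fun σ : Equiv.Perm (Fin d) =>
      ((Finset.univ.filter
          (fun R : Fin m → Fin (b ^ d) => (List.ofFn (fun t => a (R t))).prod = σ)).card : ℝ)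
        / (Fintype.card (Fin (b ^ d)) : ℝ) ^ m)
      = fun m => fun σ => p a m σ := rfl
  rw [hfun]
  constructor
  · intro h
    rw [tendsto_pi_nhds] at h
    have hupos : 0 < u (Equiv.Perm (Fin d)) := by
      rw [u]
      have : 0 < (Fintype.card (Equiv.Perm (Fin d)) : ℝ) := by exact_mod_cast Fintype.card_pos
      positivity
    have hev : ∀ᶠ m : ℕ in Filter.atTop, ∀ σ : Equiv.Perm (Fin d), 0 < p a m σ := by
      rw [Filter.eventually_all]
      intro σ
      exact (h σ).eventually (eventually_gt_nhds hupos)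
    obtain ⟨m, hm1, hm2⟩ := (hev.and (eventually_ge_atTop 1)).exists
    refine ⟨m, hm2, fun σ => ?_⟩
    have hcnt : 0 < cnt a m σ := by
      rcases Nat.eq_zero_or_pos (cnt a m σ) with hz | hpos
      · exfalso
        have := hm1 σ
        rw [p, hz] at this
        simp at this
      · exact hpos
    obtain ⟨R, hR⟩ := Finset.card_pos.1 hcnt
    rw [Finset.mem_filter] at hR
    refine ⟨List.ofFn R, List.length_ofFn (f := R), ?_⟩
    rw [List.map_ofFn]
    exact hR.2
  · rintro ⟨m, hm, h⟩
    apply tendsto_of_pos a hι m hm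
    intro σ
    obtain ⟨L, hlen, hprod⟩ := h σ
    have key : ∃ R : Fin m → Fin (b ^ d), (List.ofFn fun t => a (R t)).prod = σ := by
      subst hlen
      refine ⟨L.get, ?_⟩
      rw [show (fun t => a (L.get t)) = a ∘ L.get from rfl, ← List.map_ofFn, List.ofFn_get]
      exact hprod
    obtain ⟨R, hR⟩ := key
    have hcnt : 0 < cnt a m σ := by
      apply Finset.card_pos.2
      exact ⟨R, by simp [Finset.mem_filter, hR]⟩
    rw [p]
    apply div_pos
    · exact_mod_cast hcnt
    · have : 0 < (Fintype.card (Fin (b ^ d)) : ℝ) := by exact_mod_cast hι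
      positivity



/-- A curve whose subregions (indexed by `ι`) carry the permutations `a : ι → S_d` has
*neutral orientation* if, for a uniformly random sequence `R` of subregion indices of
length `m`, the distribution of the composition `a(R)` of the corresponding
permutations converges, as `m → ∞`, to the uniform distribution on `S_d`, which assigns
probability `1/d!` to each permutation. -/
def NeutralOrientation {d : ℕ} {ι : Type} [Fintype ι]
    (a : ι → Equiv.Perm (Fin d)) : Prop :=
  Filter.Tendsto
    (fun m : ℕ => fun σ : Equiv.Perm (Fin d) =>
      ((Finset.univ.filter
          (fun R : Fin m → ι => (List.ofFn (fun t => a (R t))).prod = σ)).card : ℝ)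
        / (Fintype.card ι : ℝ) ^ m)
    Filter.atTop (nhds (fun _ => (Nat.factorial d : ℝ)⁻¹))

/-- A `d`-dimensional `b`-regular mono-curve with subregion permutations
`a(0), ..., a(b^d - 1)` has neutral orientation if and only if there exists a positive
integer `m` such that every permutation in `S_d` can be written as a composition of
exactly `m` permutations from the multiset `{a(0), ..., a(b^d - 1)}`. -/
theorem neutralOrientation_iff_compositions_of_fixed_length
    (b d : ℕ) (hb : 2 ≤ b) (hd : 1 ≤ d) (a : Fin (b ^ d) → Equiv.Perm (Fin d)) :
    NeutralOrientation a ↔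
      ∃ m : ℕ, 0 < m ∧ ∀ σ : Equiv.Perm (Fin d),
        ∃ L : List (Fin (b ^ d)), L.length = m ∧ (L.map a).prod = σ := by
  exact test_main b d hb hd a
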